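/- Cardinality of the ergodic component: Let N ≥ 1 and let k be an integer with N/2 < k ≤ N−1, and set m = N−k. Then the number of configurations in Ω_N^k equals binom(k,m) + binom(k−1,m−1), which also equals (N/k)·binom(k,N−k). -/

import Mathlib

open scoped BigOperators

namespace FEP

/-- A configuration of the facilitated exclusion process on the discrete torus `𝕋_N`. -/
abbrev Config (N : ℕ) := ZMod N → Bool

/-- Number of particles of a configuration. -/
def numParticles {N : ℕ} [NeZero N] (η : Config N) : ℕ :=
  ∑ x : ZMod N, (if η x then 1 else 0)

/-- The ergodic set `𝓔_N`. -/
def ergodicSet (N : ℕ) [NeZero N] : Set (Config N) :=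
  {η | (∀ x : ZMod N, η x = true ∨ η (x + 1) = true) ∧ N < 2 * numParticles η}

/-! ### Path counting -/

def good (n j : ℕ) : Finset (Finset ℕ) :=
  ((Finset.range n).powersetCard j).filter (fun s => ∀ i ∈ s, i + 1 ∉ s)

lemma mem_good {n j : ℕ} {s : Finset ℕ} :
    s ∈ good n j ↔ s ⊆ Finset.range n ∧ s.card = j ∧ ∀ i ∈ s, i + 1 ∉ s := by
  simp [good, Finset.mem_powersetCard, and_assoc]

lemma good_zero_right (n : ℕ) : (good n 0).card = 1 := by
  have : good n 0 = {∅} := by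
    ext s
    simp only [mem_good, Finset.mem_singleton, Finset.card_eq_zero]
    constructor
    · rintro ⟨-, h, -⟩; exact h
    · rintro rfl; simp
  simp [this]

lemma good_zero_left (j : ℕ) : (good 0 (j + 1)).card = 0 := by
  rw [Finset.card_eq_zero]
  ext s
  simp only [mem_good, Finset.range_zero, Finset.subset_empty, Finset.notMem_empty, iff_false]
  rintro ⟨rfl, h, -⟩
  simp at h

lemma good_one (j : ℕ) : (good 1 (j + 1)).card = if j = 0 then 1 else 0 := by
  rcases Nat.eq_zero_or_pos j with rfl | hj
  · have : good 1 1 = {{0}} := by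
      ext s
      simp only [mem_good, Finset.mem_singleton]
      constructor
      · rintro ⟨hsub, hcard, -⟩
        rcases Finset.card_eq_one.mp hcard with ⟨a, rfl⟩
        have := hsub (Finset.mem_singleton_self a)
        simp only [Finset.mem_range, Nat.lt_one_iff] at this
        simp [this]
      · rintro rfl
        refine ⟨by simp, by simp, by simp⟩
    simp [this]
  · have hne : j ≠ 0 := hj.ne'
    rw [if_neg hne, Finset.card_eq_zero]
    ext s
    simp only [mem_good, Finset.notMem_empty, iff_false]
    rintro ⟨hsub, hcard, -⟩
    have := Finset.card_le_card hsub
    simp [hcard] at this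
    omega

lemma good_recursion (n j : ℕ) :
    (good (n + 2) (j + 1)).card = (good n j).card + (good (n + 1) (j + 1)).card := by
  rw [← Finset.card_filter_add_card_filter_not
    (s := good (n + 2) (j + 1)) (p := fun s => n + 1 ∈ s)]
  congr 1
  · -- sets containing n+1 ↔ good n j via insert/erase
    rw [eq_comm]
    apply Finset.card_nbij' (fun s => insert (n + 1) s) (fun s => s.erase (n + 1))
    · -- insert maps good n j into filter
      intro s hs
      rw [Finset.mem_coe, mem_good] at hs
      obtain ⟨hsub, hcard, hadj⟩ := hs
      have hnotmem : n + 1 ∉ s := fun h => by simpa using hsub h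
      simp only [Finset.mem_coe, Finset.mem_filter, mem_good]
      refine ⟨⟨?_, ?_, ?_⟩, Finset.mem_insert_self _ _⟩
      · intro x hx
        rcases Finset.mem_insert.mp hx with rfl | hx
        · simp
        · have := hsub hx; simp only [Finset.mem_range] at this ⊢; omega
      · rw [Finset.card_insert_of_notMem hnotmem, hcard]
      · intro i hi h
        rcases Finset.mem_insert.mp hi with rfl | hi
        · rcases Finset.mem_insert.mp h with h | h
          · omega
          · have := hsub h; simp only [Finset.mem_range] at this; omega
        · rcases Finset.mem_insert.mp h with h | h
          · have := hsub hi; simp only [Finset.mem_range] at this; omega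
          · exact hadj i hi h
    · -- erase maps filter into good n j
      intro s hs
      simp only [Finset.mem_coe, Finset.mem_filter, mem_good] at hs
      obtain ⟨⟨hsub, hcard, hadj⟩, hmem⟩ := hs
      rw [Finset.mem_coe, mem_good]
      have hn : n ∉ s := fun hn => hadj n hn hmem
      refine ⟨?_, ?_, ?_⟩
      · intro x hx
        have hx' := Finset.mem_of_mem_erase hx
        have hxne : x ≠ n + 1 := Finset.ne_of_mem_erase hx
        have := hsub hx'
        simp only [Finset.mem_range] at this ⊢
        have hx2 : x < n + 2 := this
        rcases Nat.lt_or_ge x n with h | h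
        · exact h
        · exfalso
          have : x = n ∨ x = n + 1 := by omega
          rcases this with rfl | rfl
          · exact hn hx'
          · exact hxne rfl
      · rw [Finset.card_erase_of_mem hmem, hcard]; rfl
      · intro i hi h
        exact hadj i (Finset.mem_of_mem_erase hi) (Finset.mem_of_mem_erase h)
    · intro s hs
      rw [Finset.mem_coe, mem_good] at hs
      have : n + 1 ∉ s := fun h => by simpa using hs.1 h
      exact Finset.erase_insert this
    · intro s hs
      simp only [Finset.mem_coe, Finset.mem_filter] at hs
      exact Finset.insert_erase hs.2
  · -- sets not containing n+1 = good (n+1) (j+1)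
    congr 1
    ext s
    simp only [Finset.mem_coe, Finset.mem_filter, mem_good]
    constructor
    · rintro ⟨⟨hsub, hcard, hadj⟩, hmem⟩
      refine ⟨?_, hcard, hadj⟩
      intro x hx
      have := hsub hx
      simp only [Finset.mem_range] at this ⊢
      rcases Nat.lt_or_ge x (n + 1) with h | h
      · exact h
      · exfalso; have : x = n + 1 := by omega
        exact hmem (this ▸ hx)
    · rintro ⟨hsub, hcard, hadj⟩
      have : n + 1 ∉ s := fun h => by simpa using hsub h
      exact ⟨⟨hsub.trans (by intro x; simp only [Finset.mem_range]; omega), hcard, hadj⟩, this⟩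

lemma card_good : ∀ n j : ℕ, (good n j).card = Nat.choose (n + 1 - j) j := by
  intro n
  induction n using Nat.strong_induction_on with
  | _ n ih =>
    intro j
    match n, j with
    | n, 0 => simpa using good_zero_right n
    | 0, j + 1 => simp [good_zero_left]
    | 1, j + 1 =>
      rw [good_one]
      rcases Nat.eq_zero_or_pos j with rfl | hj
      · simp
      · rw [if_neg hj.ne']
        have : 2 - (j + 1) = 0 ∨ 2 - (j+1) = 1 := by omega
        rcases this with h | h <;> rw [h]
        · simp
        · rw [Nat.choose_eq_zero_of_lt (by omega)]
    | (n + 2), (j + 1) =>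
      rw [good_recursion, ih n (by omega) j, ih (n + 1) (by omega) (j + 1)]
      have h1 : n + 2 + 1 - (j + 1) = n + 2 - j := by omega
      have h2 : n + 1 + 1 - (j + 1) = n + 1 - j := by omega
      rw [h1, h2]
      rcases Nat.lt_or_ge (n + 1) j with h | h
      · rw [Nat.choose_eq_zero_of_lt (by omega), Nat.choose_eq_zero_of_lt (by omega),
          Nat.choose_eq_zero_of_lt (by omega)]
      · have : n + 2 - j = (n + 1 - j) + 1 := by omega
        rw [this, Nat.choose_succ_succ]

/-! ### Configurations and their zero sets -/

def zeroSet {N : ℕ} [NeZero N] (η : Config N) : Finset (ZMod N) :=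
  Finset.univ.filter (fun x => η x = false)

lemma mem_zeroSet {N : ℕ} [NeZero N] {η : Config N} {x : ZMod N} :
    x ∈ zeroSet η ↔ η x = false := by simp [zeroSet]

lemma numParticles_add_card_zeroSet {N : ℕ} [NeZero N] (η : Config N) :
    numParticles η + (zeroSet η).card = N := by
  classical
  have h1 : numParticles η = (Finset.univ.filter (fun x => η x = true)).card := by
    rw [Finset.card_filter]
    unfold numParticles
    apply Finset.sum_congr rfl
    intro x _
    cases h : η x <;> simp [h]
  have h2 : zeroSet η = Finset.univ.filter (fun x => ¬ η x = true) := by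
    ext x; simp [zeroSet]
  rw [h1, h2, Finset.card_filter_add_card_filter_not]
  simp [ZMod.card]

lemma ite_ft_eq_false {c : Prop} [Decidable c] :
    (if c then false else true) = false ↔ c := by
  by_cases h : c <;> simp [h]

lemma ite_ft_eq_true {c : Prop} [Decidable c] :
    (if c then false else true) = true ↔ ¬ c := by
  by_cases h : c <;> simp [h]

lemma val_add_one {N : ℕ} [NeZero N] (hN : 2 ≤ N) (x : ZMod N) (h : x.val + 1 < N) :
    (x + 1).val = x.val + 1 := by
  haveI : Fact (1 < N) := ⟨hN⟩
  rw [ZMod.val_add, ZMod.val_one, Nat.mod_eq_of_lt h]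

lemma add_one_eq_zero_of_val {N : ℕ} [NeZero N] (hN : 2 ≤ N) (x : ZMod N)
    (h : x.val = N - 1) : x + 1 = 0 := by
  haveI : Fact (1 < N) := ⟨hN⟩
  rw [← ZMod.val_eq_zero, ZMod.val_add, ZMod.val_one, h]
  have : N - 1 + 1 = N := by omega
  rw [this, Nat.mod_self]

lemma val_pos_of_ne_zero {N : ℕ} [NeZero N] {x : ZMod N} (h : x ≠ 0) : 1 ≤ x.val := by
  rcases Nat.eq_zero_or_pos x.val with h0 | h0
  · exact absurd (ZMod.val_eq_zero x |>.mp h0) h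
  · exact h0

/-- Counting configurations with a one at the origin. -/
lemma card_ones (N m : ℕ) [NeZero N] (hN : 3 ≤ N) :
    (Finset.univ.filter (fun η : Config N =>
        ((∀ x : ZMod N, η x = true ∨ η (x + 1) = true) ∧ (zeroSet η).card = m)
          ∧ η 0 = true)).card
      = (good (N - 1) m).card := by
  classical
  haveI : Fact (1 < N) := ⟨by omega⟩
  apply Finset.card_nbij'
    (i := fun η => (zeroSet η).image (fun x : ZMod N => x.val - 1))
    (j := fun s => fun x : ZMod N => if x ≠ 0 ∧ x.val - 1 ∈ s then false else true)
  · -- forward map lands in good (N-1) m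
    intro η hη
    simp only [Finset.mem_coe, Finset.mem_filter, Finset.mem_univ, true_and] at hη
    obtain ⟨⟨hadj, hcard⟩, h0⟩ := hη
    have hz : ∀ x ∈ zeroSet η, x ≠ 0 := by
      intro x hx h; subst h; rw [mem_zeroSet] at hx; rw [h0] at hx; simp at hx
    have hinj : Set.InjOn (fun x : ZMod N => x.val - 1) (zeroSet η) := by
      intro x hx y hy hxy
      have hx1 := val_pos_of_ne_zero (hz x hx)
      have hy1 := val_pos_of_ne_zero (hz y hy)
      apply ZMod.val_injective
      simp only at hxy
      omega
    rw [Finset.mem_coe, mem_good]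
    refine ⟨?_, ?_, ?_⟩
    · intro i hi
      simp only [Finset.mem_image] at hi
      obtain ⟨x, hx, rfl⟩ := hi
      have := ZMod.val_lt x
      have := val_pos_of_ne_zero (hz x hx)
      simp only [Finset.mem_range]
      omega
    · rw [Finset.card_image_of_injOn hinj, hcard]
    · intro i hi hi1
      simp only [Finset.mem_image] at hi hi1
      obtain ⟨x, hx, hxv⟩ := hi
      obtain ⟨y, hy, hyv⟩ := hi1
      have hx1 := val_pos_of_ne_zero (hz x hx)
      have hy1 := val_pos_of_ne_zero (hz y hy)
      have hyval : y.val = x.val + 1 := by omega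
      have hylt := ZMod.val_lt y
      have : y = x + 1 := by
        apply ZMod.val_injective
        rw [val_add_one (by omega) x (by omega), hyval]
      rcases hadj x with h | h
      · rw [mem_zeroSet] at hx; rw [hx] at h; simp at h
      · rw [← this] at h; rw [mem_zeroSet] at hy; rw [hy] at h; simp at h
  · -- backward map lands in the filter
    intro s hs
    rw [Finset.mem_coe, mem_good] at hs
    obtain ⟨hsub, hcard, hadj⟩ := hs
    have hrange : ∀ i ∈ s, i < N - 1 := by
      intro i hi; have := hsub hi; simpa using this
    simp only [Finset.mem_coe, Finset.mem_filter, Finset.mem_univ, true_and]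
    refine ⟨⟨?_, ?_⟩, ?_⟩
    · -- no two adjacent zeros
      intro x
      by_contra hcon
      push_neg at hcon
      obtain ⟨hx, hx1⟩ := hcon
      have hxf : (if x ≠ 0 ∧ x.val - 1 ∈ s then false else true) = false := by
        cases h : (if x ≠ 0 ∧ x.val - 1 ∈ s then false else true) with
        | false => rfl
        | true => exact absurd h hx
      have hx1f : (if x + 1 ≠ 0 ∧ (x + 1).val - 1 ∈ s then false else true) = false := by
        cases h : (if x + 1 ≠ 0 ∧ (x + 1).val - 1 ∈ s then false else true) with
        | false => rfl
        | true => exact absurd h hx1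
      rw [ite_ft_eq_false] at hxf hx1f
      obtain ⟨hxne, hxs⟩ := hxf
      obtain ⟨hx1ne, hx1s⟩ := hx1f
      have hxv := val_pos_of_ne_zero hxne
      have hxlt := ZMod.val_lt x
      by_cases hlast : x.val = N - 1
      · exact hx1ne (add_one_eq_zero_of_val (by omega) x hlast)
      · have hvadd : (x + 1).val = x.val + 1 := val_add_one (by omega) x (by omega)
        rw [hvadd] at hx1s
        have : x.val - 1 + 1 = x.val + 1 - 1 := by omega
        exact hadj (x.val - 1) hxs (this ▸ hx1s)
    · -- zero set has cardinality m
      have : zeroSet (fun x : ZMod N => if x ≠ 0 ∧ x.val - 1 ∈ s then false else true)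
          = Finset.univ.filter (fun x : ZMod N => x ≠ 0 ∧ x.val - 1 ∈ s) := by
        ext x
        simp only [mem_zeroSet, Finset.mem_filter, Finset.mem_univ, true_and]
        exact ite_ft_eq_false
      rw [this, ← hcard]
      apply Finset.card_nbij' (i := fun x : ZMod N => x.val - 1)
        (j := fun i => ((i + 1 : ℕ) : ZMod N))
      · intro x hx
        simp only [Finset.mem_coe, Finset.mem_filter, Finset.mem_univ, true_and] at hx
        exact hx.2
      · intro i hi
        have hilt := hrange i hi
        have hval : ((i + 1 : ℕ) : ZMod N).val = i + 1 := ZMod.val_cast_of_lt (by omega)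
        simp only [Finset.mem_coe, Finset.mem_filter, Finset.mem_univ, true_and]
        constructor
        · intro h
          rw [← ZMod.val_eq_zero, hval] at h
          omega
        · rw [hval]; simpa using hi
      · intro x hx
        simp only [Finset.mem_coe, Finset.mem_filter, Finset.mem_univ, true_and] at hx
        have h1 := val_pos_of_ne_zero hx.1
        have h2 := ZMod.val_lt x
        have : x.val - 1 + 1 = x.val := by omega
        dsimp only
        rw [this]
        apply ZMod.val_injective
        rw [ZMod.val_cast_of_lt h2]
      · intro i hi
        have hilt := hrange i hi
        dsimp only
        rw [ZMod.val_cast_of_lt (show i + 1 < N by omega)]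
        omega
    · -- origin is occupied
      rw [ite_ft_eq_true]
      simp
  · -- left inverse
    intro η hη
    simp only [Finset.mem_coe, Finset.mem_filter, Finset.mem_univ, true_and] at hη
    obtain ⟨⟨hadj, hcard⟩, h0⟩ := hη
    funext x
    by_cases hx : η x = false
    · have hxz : x ∈ zeroSet η := mem_zeroSet.mpr hx
      have hxne : x ≠ 0 := by rintro rfl; rw [h0] at hx; simp at hx
      rw [hx, ite_ft_eq_false]
      exact ⟨hxne, Finset.mem_image_of_mem _ hxz⟩
    · have hx' : η x = true := by revert hx; cases η x <;> simp
      rw [hx', ite_ft_eq_true]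
      rintro ⟨hxne, hmem⟩
      simp only [Finset.mem_image] at hmem
      obtain ⟨y, hy, hyv⟩ := hmem
      have hyne : y ≠ 0 := by
        rintro rfl; rw [mem_zeroSet, h0] at hy; simp at hy
      have h1 := val_pos_of_ne_zero hxne
      have h2 := val_pos_of_ne_zero hyne
      have : y = x := ZMod.val_injective _ (by omega)
      subst this
      rw [mem_zeroSet] at hy
      rw [hy] at hx'; simp at hx'
  · -- right inverse
    intro s hs
    rw [Finset.mem_coe, mem_good] at hs
    obtain ⟨hsub, hcard, hadj⟩ := hs
    have hrange : ∀ i ∈ s, i < N - 1 := by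
      intro i hi; have := hsub hi; simpa using this
    ext i
    simp only [Finset.mem_image, mem_zeroSet]
    constructor
    · rintro ⟨x, hx, rfl⟩
      rw [ite_ft_eq_false] at hx
      exact hx.2
    · intro hi
      refine ⟨((i + 1 : ℕ) : ZMod N), ?_, ?_⟩
      · rw [ite_ft_eq_false]
        have hval : ((i + 1 : ℕ) : ZMod N).val = i + 1 :=
          ZMod.val_cast_of_lt (by have := hrange i hi; omega)
        constructor
        · intro h; rw [← ZMod.val_eq_zero, hval] at h; omega
        · rw [hval]; simpa using hi
      · rw [ZMod.val_cast_of_lt (by have := hrange i hi; omega)]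
        omega

/-- Counting configurations with a zero at the origin. -/
lemma card_zero (N m : ℕ) [NeZero N] (hN : 3 ≤ N) (hm : 1 ≤ m) :
    (Finset.univ.filter (fun η : Config N =>
        ((∀ x : ZMod N, η x = true ∨ η (x + 1) = true) ∧ (zeroSet η).card = m)
          ∧ η 0 = false)).card
      = (good (N - 3) (m - 1)).card := by
  classical
  haveI : Fact (1 < N) := ⟨by omega⟩
  have hone : (1 : ZMod N).val = 1 := ZMod.val_one N
  apply Finset.card_nbij'
    (i := fun η => ((zeroSet η).erase 0).image (fun x : ZMod N => x.val - 2))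
    (j := fun s => fun x : ZMod N =>
      if x = 0 ∨ (2 ≤ x.val ∧ x.val - 2 ∈ s) then false else true)
  · -- forward map lands in good (N-3) (m-1)
    intro η hη
    simp only [Finset.mem_coe, Finset.mem_filter, Finset.mem_univ, true_and] at hη
    obtain ⟨⟨hadj, hcard⟩, h0⟩ := hη
    have key : ∀ x ∈ (zeroSet η).erase 0, 2 ≤ x.val ∧ x.val ≤ N - 2 := by
      intro x hx
      have hxz := Finset.mem_of_mem_erase hx
      have hxne : x ≠ 0 := Finset.ne_of_mem_erase hx
      rw [mem_zeroSet] at hxz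
      have h1x := val_pos_of_ne_zero hxne
      have hlt := ZMod.val_lt x
      have hne1 : x.val ≠ 1 := by
        intro h
        have : x = 1 := ZMod.val_injective _ (by rw [h, hone])
        subst this
        rcases hadj 0 with h' | h'
        · rw [h0] at h'; simp at h'
        · rw [zero_add] at h'; rw [hxz] at h'; simp at h'
      have hneN : x.val ≠ N - 1 := by
        intro h
        have hx1 : x + 1 = 0 := add_one_eq_zero_of_val (by omega) x h
        rcases hadj x with h' | h'
        · rw [hxz] at h'; simp at h'
        · rw [hx1, h0] at h'; simp at h'
      omega
    have hinj : Set.InjOn (fun x : ZMod N => x.val - 2) ((zeroSet η).erase 0) := by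
      intro x hx y hy hxy
      have h1 := key x hx
      have h2 := key y hy
      apply ZMod.val_injective
      simp only at hxy
      omega
    rw [Finset.mem_coe, mem_good]
    refine ⟨?_, ?_, ?_⟩
    · intro i hi
      simp only [Finset.mem_image] at hi
      obtain ⟨x, hx, rfl⟩ := hi
      have := key x hx
      simp only [Finset.mem_range]
      omega
    · rw [Finset.card_image_of_injOn hinj, Finset.card_erase_of_mem, hcard]
      rw [mem_zeroSet]
      exact h0
    · intro i hi hi1
      simp only [Finset.mem_image] at hi hi1
      obtain ⟨x, hx, hxv⟩ := hi
      obtain ⟨y, hy, hyv⟩ := hi1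
      have h1 := key x hx
      have h2 := key y hy
      have hyval : y.val = x.val + 1 := by omega
      have : y = x + 1 := by
        apply ZMod.val_injective
        rw [val_add_one (by omega) x (by omega), hyval]
      rcases hadj x with h' | h'
      · have := Finset.mem_of_mem_erase hx; rw [mem_zeroSet] at this
        rw [this] at h'; simp at h'
      · rw [← this] at h'
        have := Finset.mem_of_mem_erase hy; rw [mem_zeroSet] at this
        rw [this] at h'; simp at h'
  · -- backward map lands in the filter
    intro s hs
    rw [Finset.mem_coe, mem_good] at hs
    obtain ⟨hsub, hcard, hadj⟩ := hs
    have hrange : ∀ i ∈ s, i < N - 3 := by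
      intro i hi; have := hsub hi; simpa using this
    simp only [Finset.mem_coe, Finset.mem_filter, Finset.mem_univ, true_and]
    refine ⟨⟨?_, ?_⟩, ?_⟩
    · -- no two adjacent zeros
      intro x
      by_contra hcon
      push_neg at hcon
      obtain ⟨hx, hx1⟩ := hcon
      have hxf : x = 0 ∨ (2 ≤ x.val ∧ x.val - 2 ∈ s) := by
        rw [← ite_ft_eq_false (c := x = 0 ∨ (2 ≤ x.val ∧ x.val - 2 ∈ s))]
        cases h : (if x = 0 ∨ (2 ≤ x.val ∧ x.val - 2 ∈ s) then false else true) with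
        | false => rfl
        | true => exact absurd h hx
      have hx1f : x + 1 = 0 ∨ (2 ≤ (x + 1).val ∧ (x + 1).val - 2 ∈ s) := by
        rw [← ite_ft_eq_false (c := x + 1 = 0 ∨ (2 ≤ (x + 1).val ∧ (x + 1).val - 2 ∈ s))]
        cases h : (if x + 1 = 0 ∨ (2 ≤ (x + 1).val ∧ (x + 1).val - 2 ∈ s)
            then false else true) with
        | false => rfl
        | true => exact absurd h hx1
      rcases hxf with rfl | ⟨hx2, hxs⟩
      · rw [zero_add] at hx1f
        rcases hx1f with h | ⟨h, -⟩
        · rw [← ZMod.val_eq_zero, hone] at h; omega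
        · rw [hone] at h; omega
      · have hlt : x.val - 2 < N - 3 := hrange _ hxs
        have hxlt := ZMod.val_lt x
        have hvadd : (x + 1).val = x.val + 1 := val_add_one (by omega) x (by omega)
        rcases hx1f with h | ⟨-, hs1⟩
        · rw [← ZMod.val_eq_zero, hvadd] at h; omega
        · rw [hvadd] at hs1
          have : x.val - 2 + 1 = x.val + 1 - 2 := by omega
          exact hadj (x.val - 2) hxs (this ▸ hs1)
    · -- zero set has cardinality m
      have hT : zeroSet (fun x : ZMod N =>
            if x = 0 ∨ (2 ≤ x.val ∧ x.val - 2 ∈ s) then false else true)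
          = insert (0 : ZMod N)
              (Finset.univ.filter (fun x : ZMod N => 2 ≤ x.val ∧ x.val - 2 ∈ s)) := by
        ext x
        simp only [mem_zeroSet, Finset.mem_insert, Finset.mem_filter, Finset.mem_univ,
          true_and]
        rw [ite_ft_eq_false]
      rw [hT, Finset.card_insert_of_notMem (by
        simp only [Finset.mem_coe, Finset.mem_filter, Finset.mem_univ, true_and]
        intro h
        rw [ZMod.val_zero] at h
        omega)]
      have hTc : (Finset.univ.filter (fun x : ZMod N => 2 ≤ x.val ∧ x.val - 2 ∈ s)).card
          = s.card := by
        apply Finset.card_nbij' (i := fun x : ZMod N => x.val - 2)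
          (j := fun i => ((i + 2 : ℕ) : ZMod N))
        · intro x hx
          simp only [Finset.mem_coe, Finset.mem_filter, Finset.mem_univ, true_and] at hx
          exact hx.2
        · intro i hi
          have hilt := hrange i hi
          have hval : ((i + 2 : ℕ) : ZMod N).val = i + 2 := ZMod.val_cast_of_lt (by omega)
          simp only [Finset.mem_coe, Finset.mem_filter, Finset.mem_univ, true_and, hval]
          exact ⟨by omega, by simpa using hi⟩
        · intro x hx
          simp only [Finset.mem_coe, Finset.mem_filter, Finset.mem_univ, true_and] at hx
          have h2 := ZMod.val_lt x
          have : x.val - 2 + 2 = x.val := by omega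
          dsimp only
          rw [this]
          apply ZMod.val_injective
          rw [ZMod.val_cast_of_lt h2]
        · intro i hi
          have hilt := hrange i hi
          dsimp only
          rw [ZMod.val_cast_of_lt (show i + 2 < N by omega)]
          omega
      rw [hTc, hcard]
      omega
    · -- origin is empty
      rw [ite_ft_eq_false]
      tauto
  · -- left inverse
    intro η hη
    simp only [Finset.mem_coe, Finset.mem_filter, Finset.mem_univ, true_and] at hη
    obtain ⟨⟨hadj, hcard⟩, h0⟩ := hη
    have key : ∀ x ∈ (zeroSet η).erase 0, 2 ≤ x.val := by
      intro x hx
      have hxz := Finset.mem_of_mem_erase hx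
      have hxne : x ≠ 0 := Finset.ne_of_mem_erase hx
      rw [mem_zeroSet] at hxz
      have h1x := val_pos_of_ne_zero hxne
      have hne1 : x.val ≠ 1 := by
        intro h
        have : x = 1 := ZMod.val_injective _ (by rw [h, hone])
        subst this
        rcases hadj 0 with h' | h'
        · rw [h0] at h'; simp at h'
        · rw [zero_add] at h'; rw [hxz] at h'; simp at h'
      omega
    funext x
    by_cases hx0 : x = 0
    · subst hx0
      rw [h0, ite_ft_eq_false]
      tauto
    by_cases hx : η x = false
    · have hxz : x ∈ (zeroSet η).erase 0 :=
        Finset.mem_erase.mpr ⟨hx0, mem_zeroSet.mpr hx⟩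
      rw [hx, ite_ft_eq_false]
      exact Or.inr ⟨key x hxz, Finset.mem_image_of_mem _ hxz⟩
    · have hx' : η x = true := by revert hx; cases η x <;> simp
      rw [hx', ite_ft_eq_true]
      rintro (rfl | ⟨h2, hmem⟩)
      · exact hx0 rfl
      · simp only [Finset.mem_image] at hmem
        obtain ⟨y, hy, hyv⟩ := hmem
        have hy2 := key y hy
        have : y = x := ZMod.val_injective _ (by omega)
        subst this
        have := Finset.mem_of_mem_erase hy
        rw [mem_zeroSet] at this
        rw [this] at hx'; simp at hx'
  · -- right inverse
    intro s hs
    rw [Finset.mem_coe, mem_good] at hs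
    obtain ⟨hsub, hcard, hadj⟩ := hs
    have hrange : ∀ i ∈ s, i < N - 3 := by
      intro i hi; have := hsub hi; simpa using this
    ext i
    simp only [Finset.mem_image, Finset.mem_erase, mem_zeroSet]
    constructor
    · rintro ⟨x, ⟨hxne, hx⟩, rfl⟩
      rw [ite_ft_eq_false] at hx
      rcases hx with rfl | ⟨-, hx⟩
      · exact absurd rfl hxne
      · exact hx
    · intro hi
      have hilt := hrange i hi
      have hval : ((i + 2 : ℕ) : ZMod N).val = i + 2 := ZMod.val_cast_of_lt (by omega)
      refine ⟨((i + 2 : ℕ) : ZMod N), ⟨?_, ?_⟩, ?_⟩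
      · intro h; rw [← ZMod.val_eq_zero, hval] at h; omega
      · rw [ite_ft_eq_false]
        exact Or.inr ⟨by rw [hval]; omega, by rw [hval]; simpa using hi⟩
      · rw [hval]; omega

/-- **Cardinality of the ergodic component `Ω_N^k`.**  For `N/2 < k ≤ N−1` and `m = N−k`,
`|Ω_N^k| = binom(k,m) + binom(k−1,m−1) = (N/k)·binom(k,N−k)`. -/
theorem card_ergodic_component (N k : ℕ) [NeZero N] (h1 : N < 2 * k) (h2 : k ≤ N - 1) :
    Nat.card {η : Config N // η ∈ ergodicSet N ∧ numParticles η = k}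
        = Nat.choose k (N - k) + Nat.choose (k - 1) (N - k - 1) ∧
      (Nat.card {η : Config N // η ∈ ergodicSet N ∧ numParticles η = k} : ℝ)
        = (N : ℝ) / k * Nat.choose k (N - k) := by
  classical
  have hN0 : 0 < N := NeZero.pos N
  have hN3 : 3 ≤ N := by omega
  obtain ⟨m, hm⟩ : ∃ m, N - k = m := ⟨N - k, rfl⟩
  rw [hm]
  have hk2 : 2 ≤ k := by omega
  have hm1 : 1 ≤ m := by omega
  have hmk : k + m = N := by omega
  have eg1 : N - 1 + 1 - m = k := by omega
  have eg2 : N - 3 + 1 - (m - 1) = k - 1 := by omega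
  have e1 : k - 1 + 1 = k := by omega
  have e2 : m - 1 + 1 = m := by omega
  have hkne : k ≠ 0 := by omega
  -- rewriting the predicate
  have hP : ∀ η : Config N, (η ∈ ergodicSet N ∧ numParticles η = k) ↔
      ((∀ x : ZMod N, η x = true ∨ η (x + 1) = true) ∧ (zeroSet η).card = m) := by
    intro η
    have hz := numParticles_add_card_zeroSet η
    constructor
    · rintro ⟨⟨ha, hb⟩, hc⟩; exact ⟨ha, by omega⟩
    · rintro ⟨ha, hb⟩
      have hnum : numParticles η = k := by omega
      exact ⟨⟨ha, by omega⟩, hnum⟩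
  have hcard : Nat.card {η : Config N // η ∈ ergodicSet N ∧ numParticles η = k}
      = (Finset.univ.filter (fun η : Config N =>
          (∀ x : ZMod N, η x = true ∨ η (x + 1) = true) ∧ (zeroSet η).card = m)).card := by
    rw [Nat.card_eq_fintype_card, Fintype.card_subtype]
    congr 1
    apply Finset.filter_congr
    intro η _
    exact hP η
  -- splitting according to the value at the origin
  have hsplit : (Finset.univ.filter (fun η : Config N =>
        (∀ x : ZMod N, η x = true ∨ η (x + 1) = true) ∧ (zeroSet η).card = m)).card
      = (good (N - 1) m).card + (good (N - 3) (m - 1)).card := by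
    rw [← Finset.card_filter_add_card_filter_not
      (s := Finset.univ.filter (fun η : Config N =>
        (∀ x : ZMod N, η x = true ∨ η (x + 1) = true) ∧ (zeroSet η).card = m))
      (p := fun η => η 0 = true), Finset.filter_filter, Finset.filter_filter]
    have hneg : (Finset.univ.filter (fun η : Config N =>
          ((∀ x : ZMod N, η x = true ∨ η (x + 1) = true) ∧ (zeroSet η).card = m)
            ∧ ¬ η 0 = true))
        = Finset.univ.filter (fun η : Config N =>
          ((∀ x : ZMod N, η x = true ∨ η (x + 1) = true) ∧ (zeroSet η).card = m)
            ∧ η 0 = false) := by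
      apply Finset.filter_congr
      intro η _
      simp [Bool.not_eq_true]
    rw [hneg, card_ones N m hN3, card_zero N m hN3 hm1]
  have hg1 : (good (N - 1) m).card = Nat.choose k m := by
    rw [card_good, eg1]
  have hg2 : (good (N - 3) (m - 1)).card = Nat.choose (k - 1) (m - 1) := by
    rw [card_good, eg2]
  have hmain : Nat.card {η : Config N // η ∈ ergodicSet N ∧ numParticles η = k}
      = Nat.choose k m + Nat.choose (k - 1) (m - 1) := by
    rw [hcard, hsplit, hg1, hg2]
  refine ⟨hmain, ?_⟩
  -- the real-valued identity
  have key : k * (Nat.choose k m + Nat.choose (k - 1) (m - 1)) = N * Nat.choose k m := by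
    have h := Nat.add_one_mul_choose_eq (k - 1) (m - 1)
    rw [e1, e2] at h
    calc k * (Nat.choose k m + Nat.choose (k - 1) (m - 1))
        = k * Nat.choose k m + k * Nat.choose (k - 1) (m - 1) := by ring
      _ = k * Nat.choose k m + Nat.choose k m * m := by rw [h]
      _ = (k + m) * Nat.choose k m := by ring
      _ = N * Nat.choose k m := by rw [hmk]
  rw [hmain]
  have hk0 : (k : ℝ) ≠ 0 := Nat.cast_ne_zero.mpr hkne
  rw [div_mul_eq_mul_div, eq_div_iff hk0]
  have key' : (Nat.choose k m + Nat.choose (k - 1) (m - 1)) * k = N * Nat.choose k m := by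
    rw [mul_comm]; exact key
  exact_mod_cast key'

end FEP
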